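/- Let M, K ≥ 1, let D_1, …, D_K and S be M × M Hermitian positive semidefinite complex matrices, and let ρ > 0. Define recursively e_k^{(0)} = 1/ρ for all k, and for t ≥ 1, e_k^{(t)} = (1/M)·tr( D_k · ( (1/M)·Σ_{j=1}^{K} D_j/(1 + e_j^{(t−1)}) + S + ρ·I )⁻¹ ). Then for each k the sequence (e_k^{(t)})_{t≥0} converges to a nonnegative limit e_k(ρ), and the limits satisfy the fixed-point system e_k(ρ) = (1/M)·tr( D_k · ( (1/M)·Σ_{j=1}^{K} D_j/(1 + e_j(ρ)) + S + ρ·I )⁻¹ ) for every k. -/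

import Mathlib

open Matrix Finset Filter
open scoped ComplexOrder

set_option linter.unusedSectionVars false

/-- The fixed-point iteration of the deterministic-equivalent theorem:
`e_k^{(0)} = 1/ρ` and
`e_k^{(t+1)} = (1/M) tr (D_k ((1/M) ∑_j D_j / (1 + e_j^{(t)}) + S + ρ I)⁻¹)`. -/
noncomputable def detEquivIter (M K : ℕ)
    (D : Fin K → Matrix (Fin M) (Fin M) ℂ) (S : Matrix (Fin M) (Fin M) ℂ)
    (ρ : ℝ) : ℕ → Fin K → ℂ
  | 0 => fun _ => ((ρ : ℂ))⁻¹
  | (t + 1) => fun k =>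
      (M : ℂ)⁻¹ *
        (D k *
          ((M : ℂ)⁻¹ • ∑ j, (1 + detEquivIter M K D S ρ t j)⁻¹ • D j
            + S + (ρ : ℂ) • 1)⁻¹).trace


namespace DetEquivAux

variable {n : Type*} [Fintype n] [DecidableEq n]

open scoped MatrixOrder in
lemma psd_exists_sqrt {A : Matrix n n ℂ} (hA : A.PosSemidef) :
    ∃ W : Matrix n n ℂ, W.PosSemidef ∧ W * W = A :=
  ⟨CFC.sqrt A, (CFC.sqrt_nonneg A).posSemidef, CFC.sqrt_mul_sqrt_self A hA.nonneg⟩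

open scoped MatrixOrder in
lemma psd_eq_conjTranspose_mul_self {A : Matrix n n ℂ} (hA : A.PosSemidef) :
    ∃ B : Matrix n n ℂ, A = Bᴴ * B := by
  obtain ⟨B, hB⟩ := CStarAlgebra.nonneg_iff_eq_star_mul_self.mp hA.nonneg
  exact ⟨B, hB⟩

lemma smul_psd {c : ℝ} (hc : 0 ≤ c) {A : Matrix n n ℂ} (hA : A.PosSemidef) :
    ((c : ℂ) • A).PosSemidef := by
  refine Matrix.PosSemidef.of_dotProduct_mulVec_nonneg ?_ fun x => ?_
  · unfold Matrix.IsHermitian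
    rw [conjTranspose_smul, hA.1.eq]
    congr 1
    simp [Complex.ext_iff]
  · rw [smul_mulVec, dotProduct_smul]
    exact mul_nonneg (by exact_mod_cast hc) (hA.dotProduct_mulVec_nonneg x)

lemma sum_psd {ι : Type*} (s : Finset ι) (f : ι → Matrix n n ℂ)
    (hf : ∀ j ∈ s, (f j).PosSemidef) : (∑ j ∈ s, f j).PosSemidef := by
  classical
  induction s using Finset.induction_on with
  | empty => simpa using Matrix.PosSemidef.zero
  | insert _ _ h ih =>
      rw [Finset.sum_insert h]
      exact ((hf _ (Finset.mem_insert_self _ _)).add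
        (ih fun j hj => hf j (Finset.mem_insert_of_mem hj)))

lemma trace_psd_nonneg {A : Matrix n n ℂ} (hA : A.PosSemidef) : 0 ≤ A.trace := by
  rw [Matrix.trace]
  refine Finset.sum_nonneg fun i _ => ?_
  have := hA.dotProduct_mulVec_nonneg (Pi.single i 1)
  simpa [Matrix.mulVec_single, dotProduct, Pi.single_apply, Matrix.diag] using this

lemma psd_trace_eq_zero {A : Matrix n n ℂ} (hA : A.PosSemidef) (h : A.trace = 0) :
    A = 0 := by
  obtain ⟨B, rfl⟩ := psd_eq_conjTranspose_mul_self hA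
  have hcol : ∀ j, (fun i => B i j) = 0 := by
    have htr : (Bᴴ * B).trace = ∑ j, star (fun i => B i j) ⬝ᵥ (fun i => B i j) := by
      simp [Matrix.trace, Matrix.diag, Matrix.mul_apply, dotProduct, mul_comm]
    rw [htr] at h
    intro j
    have hnn : ∀ j ∈ Finset.univ (α := n), 0 ≤ star (fun i => B i j) ⬝ᵥ (fun i => B i j) :=
      fun j _ => dotProduct_star_self_nonneg _
    have := (Finset.sum_eq_zero_iff_of_nonneg hnn).mp h j (Finset.mem_univ j)
    exact dotProduct_star_self_eq_zero.mp this
  have : B = 0 := by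
    ext i j
    have := congrFun (hcol j) i
    simpa using this
  simp [this]

lemma trace_mul_psd_nonneg {A B : Matrix n n ℂ} (hA : A.PosSemidef) (hB : B.PosSemidef) :
    0 ≤ (A * B).trace := by
  obtain ⟨W, hW, hWW⟩ := psd_exists_sqrt hA
  have h1 : A * B = W * (W * B) := by
    rw [← Matrix.mul_assoc, hWW]
  rw [h1, Matrix.trace_mul_comm, Matrix.mul_assoc]
  have : (W * B * W).PosSemidef := by
    have := hB.mul_mul_conjTranspose_same W
    rwa [hW.isHermitian.eq] at this
  simpa [Matrix.mul_assoc] using trace_psd_nonneg this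


lemma posDef_of_psd_isUnit {A : Matrix n n ℂ} (hA : A.PosSemidef) (h : IsUnit A.det) :
    A.PosDef := by
  refine Matrix.PosDef.of_dotProduct_mulVec_pos hA.1 fun x hx =>
    lt_of_le_of_ne (hA.dotProduct_mulVec_nonneg x) ?_
  intro h0
  apply hx
  have hAx : A *ᵥ x = 0 := (hA.dotProduct_mulVec_zero_iff x).mp h0.symm
  have : A⁻¹ *ᵥ (A *ᵥ x) = x := by
    rw [Matrix.mulVec_mulVec, Matrix.nonsing_inv_mul _ h, Matrix.one_mulVec]
  rw [hAx, Matrix.mulVec_zero] at this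
  exact this.symm

lemma smul_posDef {c : ℝ} (hc : 0 < c) {A : Matrix n n ℂ} (hA : A.PosDef) :
    ((c : ℂ) • A).PosDef := by
  refine Matrix.PosDef.of_dotProduct_mulVec_pos (smul_psd hc.le hA.posSemidef).1 fun x hx => ?_
  rw [smul_mulVec, dotProduct_smul]
  exact mul_pos (by exact_mod_cast hc) (hA.dotProduct_mulVec_pos hx)

lemma trace_mul_pd_pos {A B : Matrix n n ℂ} (hA : A.PosSemidef) (hA0 : A ≠ 0)
    (hB : B.PosDef) : 0 < (A * B).trace := by
  obtain ⟨W, hWH, hWW⟩ : ∃ W : Matrix n n ℂ, W.IsHermitian ∧ W * W = B :=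
    (psd_exists_sqrt hB.posSemidef).imp fun _ h => ⟨h.1.isHermitian, h.2⟩
  have hWdet : IsUnit W.det := by
    have : W.det * W.det = B.det := by rw [← Matrix.det_mul, hWW]
    have hBdet : B.det ≠ 0 := ne_of_gt hB.det_pos
    exact isUnit_iff_ne_zero.mpr (fun h0 => hBdet (by rw [← this, h0, mul_zero]))
  have hC : (W * A * W).PosSemidef := by
    have := hA.mul_mul_conjTranspose_same W
    rwa [hWH.eq] at this
  have htr : (A * B).trace = (W * A * W).trace := by
    rw [← hWW, ← Matrix.mul_assoc, Matrix.trace_mul_comm, ← Matrix.mul_assoc]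
  rw [htr]
  rcases lt_or_eq_of_le (trace_psd_nonneg hC) with h | h
  · exact h
  · exfalso
    apply hA0
    have hC0 : W * A * W = 0 := psd_trace_eq_zero hC h.symm
    have : W⁻¹ * (W * A * W) * W⁻¹ = A := by
      rw [← Matrix.mul_assoc, ← Matrix.mul_assoc, Matrix.nonsing_inv_mul _ hWdet,
        Matrix.one_mul, Matrix.mul_assoc, Matrix.mul_nonsing_inv _ hWdet, Matrix.mul_one]
    rw [hC0] at this
    simpa using this.symm

set_option maxHeartbeats 1000000 in
/-- Inverses are antitone on positive definite matrices (Loewner order). -/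
lemma inv_sub_inv_psd {A B : Matrix n n ℂ} (hA : A.PosDef) (hB : B.PosDef)
    (h : (B - A).PosSemidef) : (A⁻¹ - B⁻¹).PosSemidef := by
  obtain ⟨W, hWH, hWW, hWpsd⟩ :
      ∃ W : Matrix n n ℂ, W.IsHermitian ∧ W * W = B ∧ W.PosSemidef :=
    (psd_exists_sqrt hB.posSemidef).imp fun _ h => ⟨h.1.isHermitian, h.2, h.1⟩
  have hWdet : IsUnit W.det := by
    have : W.det * W.det = B.det := by rw [← Matrix.det_mul, hWW]
    have hBdet : B.det ≠ 0 := ne_of_gt hB.det_pos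
    exact isUnit_iff_ne_zero.mpr (fun h0 => hBdet (by rw [← this, h0, mul_zero]))
  have hWiH : (W⁻¹).IsHermitian := hWH.inv
  have hWiW : W⁻¹ * W = 1 := Matrix.nonsing_inv_mul _ hWdet
  have hWWi : W * W⁻¹ = 1 := Matrix.mul_nonsing_inv _ hWdet
  -- Z := W⁻¹ * A * W⁻¹
  obtain ⟨Z, hZdef⟩ : ∃ Z : Matrix n n ℂ, Z = W⁻¹ * A * W⁻¹ := ⟨_, rfl⟩
  have hZpsd : Z.PosSemidef := by
    have := hA.posSemidef.mul_mul_conjTranspose_same W⁻¹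
    rwa [hWiH.eq, ← hZdef] at this
  have hZdet : IsUnit Z.det := by
    have hAdet : A.det ≠ 0 := ne_of_gt hA.det_pos
    have hWidet : (W⁻¹).det ≠ 0 := by
      rw [Matrix.det_nonsing_inv]
      simpa using hWdet.ne_zero
    rw [hZdef]
    simp only [Matrix.det_mul]
    exact isUnit_iff_ne_zero.mpr (mul_ne_zero (mul_ne_zero hWidet hAdet) hWidet)
  have hZpd : Z.PosDef := posDef_of_psd_isUnit hZpsd hZdet
  -- 1 - Z is PSD
  have h1Z : ((1 : Matrix n n ℂ) - Z).PosSemidef := by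
    have := h.mul_mul_conjTranspose_same W⁻¹
    rw [hWiH.eq] at this
    have heq : W⁻¹ * (B - A) * W⁻¹ = 1 - Z := by
      rw [Matrix.mul_sub, Matrix.sub_mul]
      rw [hZdef]
      congr 1
      rw [← hWW, ← Matrix.mul_assoc, hWiW, Matrix.one_mul, hWWi]
    rwa [heq] at this
  -- Z⁻¹ - 1 is PSD
  obtain ⟨U, hUH, hUU⟩ : ∃ U : Matrix n n ℂ, U.IsHermitian ∧ U * U = Z :=
    (psd_exists_sqrt hZpd.posSemidef).imp fun _ h => ⟨h.1.isHermitian, h.2⟩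
  have hUdet : IsUnit U.det := by
    have : U.det * U.det = Z.det := by rw [← Matrix.det_mul, hUU]
    exact isUnit_iff_ne_zero.mpr (fun h0 => hZdet.ne_zero (by rw [← this, h0, mul_zero]))
  have hUiH : (U⁻¹).IsHermitian := hUH.inv
  have hUiU : U⁻¹ * U = 1 := Matrix.nonsing_inv_mul _ hUdet
  have hUUi : U * U⁻¹ = 1 := Matrix.mul_nonsing_inv _ hUdet
  have hZinv : ((Z⁻¹ : Matrix n n ℂ) - 1).PosSemidef := by
    have := h1Z.mul_mul_conjTranspose_same U⁻¹
    rw [hUiH.eq] at this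
    have heq : U⁻¹ * ((1 : Matrix n n ℂ) - Z) * U⁻¹ = Z⁻¹ - 1 := by
      rw [Matrix.mul_sub, Matrix.sub_mul]
      congr 1
      · rw [Matrix.mul_one, ← Matrix.mul_inv_rev, hUU]
      · rw [← hUU, ← Matrix.mul_assoc, hUiU, Matrix.one_mul, hUUi]
    rwa [heq] at this
  -- transport back
  have hfinal := hZinv.mul_mul_conjTranspose_same W⁻¹
  rw [hWiH.eq] at hfinal
  have heq : W⁻¹ * ((Z⁻¹ : Matrix n n ℂ) - 1) * W⁻¹ = A⁻¹ - B⁻¹ := by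
    rw [Matrix.mul_sub, Matrix.sub_mul]
    congr 1
    · have hZi : (Z⁻¹ : Matrix n n ℂ) = W * A⁻¹ * W := by
        rw [hZdef, Matrix.mul_inv_rev, Matrix.mul_inv_rev,
          Matrix.nonsing_inv_nonsing_inv _ hWdet, Matrix.mul_assoc]
      rw [hZi, ← Matrix.mul_assoc, ← Matrix.mul_assoc, hWiW, Matrix.one_mul,
        Matrix.mul_assoc, hWWi, Matrix.mul_one]
    · rw [Matrix.mul_one, ← Matrix.mul_inv_rev, hWW]
  rwa [heq] at hfinal


lemma trace_mul_mono {P X Y : Matrix n n ℂ} (hP : P.PosSemidef)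
    (h : (X - Y).PosSemidef) : (P * Y).trace ≤ (P * X).trace := by
  have h0 := trace_mul_psd_nonneg hP h
  rw [Matrix.mul_sub, Matrix.trace_sub] at h0
  exact sub_nonneg.mp h0

section Setting

variable {M K : ℕ} (D : Fin K → Matrix (Fin M) (Fin M) ℂ)
  (S : Matrix (Fin M) (Fin M) ℂ) (ρ : ℝ)

/-- The matrix `(1/M) ∑ c_j • D_j + S + ρ I` with real coefficients `c`. -/
noncomputable def Amat (c : Fin K → ℝ) : Matrix (Fin M) (Fin M) ℂ :=
  (M : ℂ)⁻¹ • ∑ j, ((c j : ℝ) : ℂ) • D j + S + (ρ : ℂ) • 1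

variable {D S ρ}

lemma Minv_cast : ((M : ℂ))⁻¹ = (((M : ℝ)⁻¹ : ℝ) : ℂ) := by push_cast; ring

lemma sumD_psd (hD : ∀ k, (D k).PosSemidef) {c : Fin K → ℝ} (hc : ∀ j, 0 ≤ c j) :
    ((M : ℂ)⁻¹ • ∑ j, ((c j : ℝ) : ℂ) • D j).PosSemidef := by
  rw [Minv_cast]
  exact smul_psd (by positivity) (sum_psd _ _ fun j _ => smul_psd (hc j) (hD j))

lemma Amat_posDef (hD : ∀ k, (D k).PosSemidef) (hS : S.PosSemidef) (hρ : 0 < ρ)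
    {c : Fin K → ℝ} (hc : ∀ j, 0 ≤ c j) : (Amat D S ρ c).PosDef := by
  have h1 : ((M : ℂ)⁻¹ • ∑ j, ((c j : ℝ) : ℂ) • D j + S).PosSemidef :=
    (sumD_psd hD hc).add hS
  have h2 : ((ρ : ℂ) • (1 : Matrix (Fin M) (Fin M) ℂ)).PosDef :=
    smul_posDef hρ Matrix.PosDef.one
  exact Matrix.PosDef.posSemidef_add h1 h2

lemma Amat_sub (c c' : Fin K → ℝ) :
    Amat D S ρ c - Amat D S ρ c' =
      (M : ℂ)⁻¹ • ∑ j, ((c j - c' j : ℝ) : ℂ) • D j := by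
  have hsum : ∑ j, ((c j - c' j : ℝ) : ℂ) • D j
      = ∑ j, ((c j : ℝ) : ℂ) • D j - ∑ j, ((c' j : ℝ) : ℂ) • D j := by
    rw [← Finset.sum_sub_distrib]
    refine Finset.sum_congr rfl fun j _ => ?_
    rw [← sub_smul]
    push_cast
    ring_nf
  rw [Amat, Amat, hsum, smul_sub]
  abel

lemma Amat_sub_affine (c c' : Fin K → ℝ) {a ε : ℝ} (h : ρ - a * ρ - ε = 0) :
    Amat D S ρ c - (((a : ℝ) : ℂ) • Amat D S ρ c' + ((ε : ℝ) : ℂ) • 1) =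
      (M : ℂ)⁻¹ • ∑ j, ((c j - a * c' j : ℝ) : ℂ) • D j + ((1 - a : ℝ) : ℂ) • S := by
  have h' : ((ρ : ℂ) - (a : ℂ) * (ρ : ℂ) - (ε : ℂ)) = 0 := by
    exact_mod_cast congrArg (fun x : ℝ => (x : ℂ)) h
  ext i i'
  simp only [Amat, Matrix.sub_apply, Matrix.add_apply, Matrix.smul_apply,
    Matrix.sum_apply, Matrix.one_apply, smul_eq_mul]
  have hsum : ∑ j, ((c j - a * c' j : ℝ) : ℂ) * D j i i'
      = ∑ j, ((c j : ℝ) : ℂ) * D j i i' - (a : ℂ) * ∑ j, ((c' j : ℝ) : ℂ) * D j i i' := by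
    rw [Finset.mul_sum, ← Finset.sum_sub_distrib]
    refine Finset.sum_congr rfl fun j _ => ?_
    push_cast
    ring
  rw [hsum]
  split_ifs <;> push_cast <;> [linear_combination h'; ring]

/-- coefficients `(1+e_j)⁻¹`. -/
noncomputable def coeff (e : Fin K → ℝ) : Fin K → ℝ := fun j => (1 + e j)⁻¹

variable (D S ρ) in
/-- The complex value of the fixed-point map. -/
noncomputable def fC (e : Fin K → ℝ) (k : Fin K) : ℂ :=
  (M : ℂ)⁻¹ * (D k * (Amat D S ρ (coeff e))⁻¹).trace

variable (D S ρ) in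
/-- The real value of the fixed-point map. -/
noncomputable def fR (e : Fin K → ℝ) (k : Fin K) : ℝ := (fC D S ρ e k).re

lemma coeff_nonneg {e : Fin K → ℝ} (he : ∀ j, 0 ≤ e j) : ∀ j, 0 ≤ coeff e j :=
  fun j => by have := he j; unfold coeff; positivity

lemma coeff_antitone {e e' : Fin K → ℝ} (he : ∀ j, 0 ≤ e j) (h : ∀ j, e j ≤ e' j) :
    ∀ j, coeff e' j ≤ coeff e j := fun j => by
  have h1 : (0:ℝ) < 1 + e j := by have := he j; linarith
  exact inv_anti₀ h1 (by linarith [h j])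

variable (D S ρ) in
/-- The real-valued fixed-point iteration. -/
noncomputable def iterR : ℕ → Fin K → ℝ
  | 0 => fun _ => ρ⁻¹
  | (t + 1) => fun k => fR D S ρ (iterR t) k

section Main

variable (hM : 1 ≤ M) (hD : ∀ k, (D k).PosSemidef) (hS : S.PosSemidef) (hρ : 0 < ρ)
include hM hD hS hρ

lemma Minv_pos : (0:ℂ) < (M : ℂ)⁻¹ := by
  rw [Minv_cast]
  rw [Complex.zero_lt_real]
  have : (0:ℝ) < (M:ℝ) := by exact_mod_cast Nat.lt_of_lt_of_le Nat.zero_lt_one hM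
  positivity

lemma fC_nonneg {e : Fin K → ℝ} (he : ∀ j, 0 ≤ e j) (k : Fin K) :
    0 ≤ fC D S ρ e k := by
  have hA : (Amat D S ρ (coeff e)).PosDef := Amat_posDef hD hS hρ (coeff_nonneg he)
  exact mul_nonneg (Minv_pos hM hD hS hρ).le
    (trace_mul_psd_nonneg (hD k) hA.inv.posSemidef)

lemma fC_eq_ofReal {e : Fin K → ℝ} (he : ∀ j, 0 ≤ e j) (k : Fin K) :
    fC D S ρ e k = ((fR D S ρ e k : ℝ) : ℂ) := by
  have h := fC_nonneg hM hD hS hρ he k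
  rw [Complex.le_def] at h
  rw [fR]
  exact Complex.ext (by simp) (by simp [← h.2])

lemma fR_nonneg {e : Fin K → ℝ} (he : ∀ j, 0 ≤ e j) (k : Fin K) :
    0 ≤ fR D S ρ e k := by
  have h := fC_nonneg hM hD hS hρ he k
  rw [Complex.le_def] at h
  simpa [fR] using h.1

lemma fR_mono {e e' : Fin K → ℝ} (he : ∀ j, 0 ≤ e j) (h : ∀ j, e j ≤ e' j) (k : Fin K) :
    fR D S ρ e k ≤ fR D S ρ e' k := by
  have he' : ∀ j, 0 ≤ e' j := fun j => le_trans (he j) (h j)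
  have hA : (Amat D S ρ (coeff e)).PosDef := Amat_posDef hD hS hρ (coeff_nonneg he)
  have hA' : (Amat D S ρ (coeff e')).PosDef := Amat_posDef hD hS hρ (coeff_nonneg he')
  have hdiff : (Amat D S ρ (coeff e) - Amat D S ρ (coeff e')).PosSemidef := by
    rw [Amat_sub]
    exact sumD_psd hD fun j => sub_nonneg.mpr (coeff_antitone he h j)
  have hinv : ((Amat D S ρ (coeff e'))⁻¹ - (Amat D S ρ (coeff e))⁻¹).PosSemidef :=
    inv_sub_inv_psd hA' hA hdiff
  have htr := trace_mul_mono (hD k) hinv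
  have : fC D S ρ e k ≤ fC D S ρ e' k :=
    mul_le_mul_of_nonneg_left htr (Minv_pos hM hD hS hρ).le
  rw [Complex.le_def] at this
  exact this.1

lemma fR_bound {e : Fin K → ℝ} (he : ∀ j, 0 ≤ e j) (k : Fin K) :
    fR D S ρ e k ≤ (M : ℝ)⁻¹ * (ρ⁻¹ * (D k).trace.re) := by
  have hA : (Amat D S ρ (coeff e)).PosDef := Amat_posDef hD hS hρ (coeff_nonneg he)
  have hρ1 : ((ρ : ℂ) • (1 : Matrix (Fin M) (Fin M) ℂ)).PosDef :=
    smul_posDef hρ Matrix.PosDef.one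
  have hdiff : (Amat D S ρ (coeff e) - (ρ : ℂ) • 1).PosSemidef := by
    have : Amat D S ρ (coeff e) - (ρ : ℂ) • 1
        = (M : ℂ)⁻¹ • ∑ j, ((coeff e j : ℝ) : ℂ) • D j + S := by
      rw [Amat]; abel
    rw [this]
    exact (sumD_psd hD (coeff_nonneg he)).add hS
  have hinvle : (((ρ : ℂ) • (1 : Matrix (Fin M) (Fin M) ℂ))⁻¹
      - (Amat D S ρ (coeff e))⁻¹).PosSemidef := inv_sub_inv_psd hρ1 hA hdiff
  have hone : ((ρ : ℂ) • (1 : Matrix (Fin M) (Fin M) ℂ))⁻¹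
      = ((ρ⁻¹ : ℝ) : ℂ) • 1 := by
    refine Matrix.inv_eq_right_inv ?_
    rw [Matrix.smul_mul, Matrix.mul_smul, Matrix.one_mul, smul_smul]
    rw [show ((ρ:ℂ) * ((ρ⁻¹:ℝ):ℂ)) = 1 by push_cast; field_simp, one_smul]
  rw [hone] at hinvle
  have htr := trace_mul_mono (hD k) hinvle
  have h2 : (D k * (((ρ⁻¹ : ℝ) : ℂ) • 1)).trace = ((ρ⁻¹ : ℝ) : ℂ) * (D k).trace := by
    rw [Matrix.mul_smul, Matrix.mul_one, Matrix.trace_smul, smul_eq_mul]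
  rw [h2] at htr
  have h3 : fC D S ρ e k ≤ (M : ℂ)⁻¹ * (((ρ⁻¹ : ℝ) : ℂ) * (D k).trace) :=
    mul_le_mul_of_nonneg_left htr (Minv_pos hM hD hS hρ).le
  rw [Complex.le_def] at h3
  have h4 := h3.1
  rw [fR]
  refine le_trans h4 ?_
  rw [Minv_cast, Complex.re_ofReal_mul, Complex.re_ofReal_mul]

lemma fR_zero_of_D_zero {e : Fin K → ℝ} (k : Fin K) (hk : D k = 0) :
    fR D S ρ e k = 0 := by
  simp [fR, fC, hk]

lemma fR_pos {e : Fin K → ℝ} (he : ∀ j, 0 ≤ e j) (k : Fin K) (hk : D k ≠ 0) :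
    0 < fR D S ρ e k := by
  have hA : (Amat D S ρ (coeff e)).PosDef := Amat_posDef hD hS hρ (coeff_nonneg he)
  have htr := trace_mul_pd_pos (hD k) hk hA.inv
  have : 0 < fC D S ρ e k := mul_pos (Minv_pos hM hD hS hρ) htr
  rw [Complex.lt_def] at this
  simpa [fR] using this.1

lemma fR_scal {e : Fin K → ℝ} (he : ∀ j, 0 ≤ e j) {α : ℝ} (hα : 1 < α)
    (k : Fin K) (hk : D k ≠ 0) :
    fR D S ρ (fun j => α * e j) k < α * fR D S ρ e k := by
  have hα0 : 0 < α := lt_trans one_pos hα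
  set a : ℝ := α⁻¹ with ha
  have ha0 : 0 < a := by positivity
  have ha1 : a < 1 := by rw [ha]; exact inv_lt_one_of_one_lt₀ hα
  set ε : ℝ := (1 - a) * ρ with hε
  have hε0 : 0 < ε := by
    have : 0 < 1 - a := by linarith
    positivity
  have he' : ∀ j, 0 ≤ α * e j := fun j => mul_nonneg hα0.le (he j)
  have hA2 : (Amat D S ρ (coeff e)).PosDef := Amat_posDef hD hS hρ (coeff_nonneg he)
  have hA1 : (Amat D S ρ (coeff fun j => α * e j)).PosDef :=
    Amat_posDef hD hS hρ (coeff_nonneg he')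
  set B2 : Matrix (Fin M) (Fin M) ℂ := ((a : ℝ) : ℂ) • Amat D S ρ (coeff e) with hB2
  set B1 : Matrix (Fin M) (Fin M) ℂ := B2 + ((ε : ℝ) : ℂ) • 1 with hB1
  have hB2pd : B2.PosDef := smul_posDef ha0 hA2
  have hB1pd : B1.PosDef :=
    hB2pd.add_posSemidef (smul_psd hε0.le Matrix.PosSemidef.one)
  -- step 1 : A1 ≥ B1
  have hstep1 : (Amat D S ρ (coeff fun j => α * e j) - B1).PosSemidef := by
    have heq := Amat_sub_affine (D := D) (S := S) (ρ := ρ)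
      (coeff fun j => α * e j) (coeff e) (a := a) (ε := ε) (by rw [hε]; ring)
    have heq2 : Amat D S ρ (coeff fun j => α * e j) - B1
        = (M : ℂ)⁻¹ • ∑ j, ((coeff (fun j => α * e j) j - a * coeff e j : ℝ) : ℂ) • D j
          + ((1 - a : ℝ) : ℂ) • S := by
      rw [hB1, hB2]; exact heq
    rw [heq2]
    refine (sumD_psd hD fun j => ?_).add (smul_psd (by linarith) hS)
    -- coefficient nonneg : (1+αe)⁻¹ - α⁻¹ (1+e)⁻¹ ≥ 0
    have h1 : (0:ℝ) < 1 + e j := by have := he j; linarith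
    have h2 : (0:ℝ) < 1 + α * e j := by have := he' j; linarith
    have h3 : 1 + α * e j ≤ α * (1 + e j) := by nlinarith [he j]
    have h4 : (α * (1 + e j))⁻¹ ≤ (1 + α * e j)⁻¹ := inv_anti₀ h2 h3
    have : a * (1 + e j)⁻¹ = (α * (1 + e j))⁻¹ := by
      rw [ha, mul_inv]
    simp only [coeff]
    rw [sub_nonneg, this]
    exact h4
  -- step 2 : A1⁻¹ ≤ B1⁻¹
  have hstep2 : (B1⁻¹ - (Amat D S ρ (coeff fun j => α * e j))⁻¹).PosSemidef :=
    inv_sub_inv_psd hB1pd hA1 hstep1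
  have htr1 := trace_mul_mono (hD k) hstep2
  -- step 3 : B1⁻¹ < B2⁻¹ in trace against D k
  have hB2det : IsUnit B2.det := isUnit_iff_ne_zero.mpr (ne_of_gt hB2pd.det_pos)
  have hB1det : IsUnit B1.det := isUnit_iff_ne_zero.mpr (ne_of_gt hB1pd.det_pos)
  have hkey : B2⁻¹ - B1⁻¹ = ((ε : ℝ) : ℂ) • (B1 * B2)⁻¹ := by
    have h5 : B2⁻¹ - B1⁻¹ = B2⁻¹ * (B1 - B2) * B1⁻¹ := by
      rw [Matrix.mul_sub, Matrix.sub_mul, Matrix.mul_assoc,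
        Matrix.mul_nonsing_inv _ hB1det, Matrix.mul_one,
        Matrix.nonsing_inv_mul _ hB2det, Matrix.one_mul]
    have h6 : B1 - B2 = ((ε : ℝ) : ℂ) • 1 := by rw [hB1]; abel
    rw [h5, h6, Matrix.mul_smul, Matrix.smul_mul, Matrix.mul_one, Matrix.mul_inv_rev]
  have hB1B2pd : (B1 * B2).PosDef := by
    have h7 : B1 * B2 = B2 * B2 + ((ε : ℝ) : ℂ) • B2 := by
      rw [hB1, Matrix.add_mul]
      congr 1
      rw [Matrix.smul_mul, Matrix.one_mul]
    rw [h7]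
    have h8 : (B2 * B2).PosSemidef := by
      have := Matrix.posSemidef_conjTranspose_mul_self B2
      rwa [hB2pd.isHermitian.eq] at this
    exact Matrix.PosDef.posSemidef_add h8 (smul_posDef hε0 hB2pd)
  have htr2 : (D k * B1⁻¹).trace < (D k * B2⁻¹).trace := by
    have h9 : (D k * (B2⁻¹ - B1⁻¹)).trace = ((ε : ℝ) : ℂ) * (D k * (B1 * B2)⁻¹).trace := by
      rw [hkey, Matrix.mul_smul, Matrix.trace_smul, smul_eq_mul]
    have h10 : 0 < (D k * (B1 * B2)⁻¹).trace := trace_mul_pd_pos (hD k) hk hB1B2pd.inv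
    have h11 : 0 < ((ε : ℝ) : ℂ) := by rw [Complex.zero_lt_real]; exact hε0
    have h12 : 0 < (D k * (B2⁻¹ - B1⁻¹)).trace := by rw [h9]; exact mul_pos h11 h10
    rw [Matrix.mul_sub, Matrix.trace_sub] at h12
    exact sub_pos.mp h12
  -- step 4 : B2⁻¹ = α • A2⁻¹
  have hB2inv : B2⁻¹ = ((α : ℝ) : ℂ) • (Amat D S ρ (coeff e))⁻¹ := by
    refine Matrix.inv_eq_right_inv ?_
    rw [hB2, Matrix.smul_mul, Matrix.mul_smul, smul_smul,
      Matrix.mul_nonsing_inv _ (isUnit_iff_ne_zero.mpr (ne_of_gt hA2.det_pos))]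
    rw [show ((a:ℝ):ℂ) * ((α:ℝ):ℂ) = 1 by
      push_cast; rw [ha]; push_cast; field_simp]
    rw [one_smul]
  -- combine
  have hfinal : (D k * (Amat D S ρ (coeff fun j => α * e j))⁻¹).trace
      < ((α : ℝ) : ℂ) * (D k * (Amat D S ρ (coeff e))⁻¹).trace := by
    calc (D k * (Amat D S ρ (coeff fun j => α * e j))⁻¹).trace
        ≤ (D k * B1⁻¹).trace := htr1
      _ < (D k * B2⁻¹).trace := htr2
      _ = ((α : ℝ) : ℂ) * (D k * (Amat D S ρ (coeff e))⁻¹).trace := by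
          rw [hB2inv, Matrix.mul_smul, Matrix.trace_smul, smul_eq_mul]
  have hfC : fC D S ρ (fun j => α * e j) k < ((α : ℝ) : ℂ) * fC D S ρ e k := by
    rw [fC, fC]
    calc (M : ℂ)⁻¹ * (D k * (Amat D S ρ (coeff fun j => α * e j))⁻¹).trace
        < (M : ℂ)⁻¹ * (((α : ℝ) : ℂ) * (D k * (Amat D S ρ (coeff e))⁻¹).trace) :=
          mul_lt_mul_of_pos_left hfinal (Minv_pos hM hD hS hρ)
      _ = ((α : ℝ) : ℂ) * ((M : ℂ)⁻¹ * (D k * (Amat D S ρ (coeff e))⁻¹).trace) := by ring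
  rw [Complex.lt_def] at hfC
  have h13 := hfC.1
  unfold fR
  rwa [Complex.re_ofReal_mul] at h13

lemma fR_continuousAt {e₀ : Fin K → ℝ} (he : ∀ j, 0 ≤ e₀ j) (k : Fin K) :
    ContinuousAt (fun e => fR D S ρ e k) e₀ := by
  have hA0 : (Amat D S ρ (coeff e₀)).PosDef := Amat_posDef hD hS hρ (coeff_nonneg he)
  have hAcont : ContinuousAt (fun e : Fin K → ℝ => Amat D S ρ (coeff e)) e₀ := by
    unfold Amat
    refine (ContinuousAt.add (ContinuousAt.add ?_ continuousAt_const) continuousAt_const)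
    refine Filter.Tendsto.const_smul ?_ _
    refine tendsto_finset_sum _ fun j _ => ?_
    refine Filter.Tendsto.smul ?_ continuousAt_const
    have h1 : ContinuousAt (fun e : Fin K → ℝ => coeff e j) e₀ := by
      have h2 : (0:ℝ) < 1 + e₀ j := by have := he j; linarith
      exact ((continuousAt_const.add (continuous_apply j).continuousAt).inv₀ (ne_of_gt h2))
    exact (Complex.continuous_ofReal.continuousAt.comp h1)
  have hinv : ContinuousAt (fun e : Fin K → ℝ => (Amat D S ρ (coeff e))⁻¹) e₀ := by
    refine ContinuousAt.comp ?_ hAcont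
    refine continuousAt_matrix_inv _ ?_
    rw [show (Ring.inverse : ℂ → ℂ) = Inv.inv from funext fun x => Ring.inverse_eq_inv x]
    exact continuousAt_inv₀ (ne_of_gt hA0.det_pos)
  have htrace : Continuous fun X : Matrix (Fin M) (Fin M) ℂ =>
      ((M : ℂ)⁻¹ * (D k * X).trace).re :=
    Complex.continuous_re.comp (continuous_const.mul
      ((continuous_const.matrix_mul continuous_id).matrix_trace))
  exact htrace.continuousAt.comp hinv

lemma iterR_nonneg : ∀ t k, 0 ≤ iterR D S ρ t k := by
  intro t
  induction t with
  | zero => intro k; simp [iterR]; positivity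
  | succ t ih => exact fun k => fR_nonneg hM hD hS hρ ih k

lemma detEquivIter_eq (t : ℕ) :
    ∀ k, detEquivIter M K D S ρ t k = ((iterR D S ρ t k : ℝ) : ℂ) := by
  induction t with
  | zero =>
      intro k
      simp [detEquivIter, iterR, Complex.ofReal_inv]
  | succ t ih =>
      intro k
      have hmat : (M : ℂ)⁻¹ • ∑ j, (1 + detEquivIter M K D S ρ t j)⁻¹ • D j
          + S + (ρ : ℂ) • 1 = Amat D S ρ (coeff (iterR D S ρ t)) := by
        have hsum : ∑ j, (1 + detEquivIter M K D S ρ t j)⁻¹ • D j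
            = ∑ j, ((coeff (iterR D S ρ t) j : ℝ) : ℂ) • D j := by
          refine Finset.sum_congr rfl fun j _ => ?_
          rw [ih j]
          congr 1
          rw [coeff]
          push_cast
          ring
        rw [Amat, hsum]
      show (M : ℂ)⁻¹ * (D k * ((M : ℂ)⁻¹ • ∑ j, (1 + detEquivIter M K D S ρ t j)⁻¹ • D j
          + S + (ρ : ℂ) • 1)⁻¹).trace = _
      rw [hmat]
      show fC D S ρ (iterR D S ρ t) k = _
      rw [fC_eq_ofReal hM hD hS hρ (iterR_nonneg hM hD hS hρ t)]
      rfl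

end Main

end Setting

end DetEquivAux

/-- The fixed-point sequences `e_k^{(t)}` of the deterministic-equivalent theorem
converge, for each `k`, to a nonnegative limit `e_k(ρ)`, and the limits satisfy the
fixed-point system
`e_k(ρ) = (1/M) tr (D_k ((1/M) ∑_j D_j / (1 + e_j(ρ)) + S + ρ I)⁻¹)`. -/
theorem stmt_15 (M K : ℕ) (hM : 1 ≤ M) (hK : 1 ≤ K)
    (D : Fin K → Matrix (Fin M) (Fin M) ℂ) (hD : ∀ k, (D k).PosSemidef)
    (S : Matrix (Fin M) (Fin M) ℂ) (hS : S.PosSemidef)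
    (ρ : ℝ) (hρ : 0 < ρ) :
    ∃ e : Fin K → ℝ, (∀ k, 0 ≤ e k) ∧
      (∀ k, Tendsto (fun t => detEquivIter M K D S ρ t k) atTop (nhds (e k))) ∧
      ∀ k, (e k : ℂ) =
        (M : ℂ)⁻¹ *
          (D k *
            ((M : ℂ)⁻¹ • ∑ j, ((1 : ℂ) + e j)⁻¹ • D j + S + (ρ : ℂ) • 1)⁻¹).trace := by
  classical
  open DetEquivAux in
  -- the real fixed-point map
  set T : (Fin K → ℝ) → Fin K → ℝ := fR D S ρ with hT
  -- upper bound for all iterates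
  set b : ℝ := ρ⁻¹ + ∑ k, (M : ℝ)⁻¹ * (ρ⁻¹ * (D k).trace.re) with hb
  have htrRe : ∀ k, 0 ≤ (D k).trace.re := by
    intro k
    have := DetEquivAux.trace_psd_nonneg (hD k)
    rw [Complex.le_def] at this
    simpa using this.1
  have hbterm : ∀ k, (0:ℝ) ≤ (M : ℝ)⁻¹ * (ρ⁻¹ * (D k).trace.re) := by
    intro k
    have := htrRe k
    positivity
  have hρinvb : ρ⁻¹ ≤ b := by
    rw [hb]
    have : (0:ℝ) ≤ ∑ k, (M : ℝ)⁻¹ * (ρ⁻¹ * (D k).trace.re) :=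
      Finset.sum_nonneg fun k _ => hbterm k
    linarith
  have hb0 : (0:ℝ) ≤ b := le_trans (by positivity) hρinvb
  have hTb : ∀ e : Fin K → ℝ, (∀ j, 0 ≤ e j) → ∀ k, T e k ≤ b := by
    intro e he k
    refine le_trans (DetEquivAux.fR_bound hM hD hS hρ he k) ?_
    rw [hb]
    have h1 : (M : ℝ)⁻¹ * (ρ⁻¹ * (D k).trace.re)
        ≤ ∑ k, (M : ℝ)⁻¹ * (ρ⁻¹ * (D k).trace.re) :=
      Finset.single_le_sum (fun k _ => hbterm k) (Finset.mem_univ k)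
    have : (0:ℝ) ≤ ρ⁻¹ := by positivity
    linarith
  have hT0 : ∀ e : Fin K → ℝ, (∀ j, 0 ≤ e j) → ∀ k, 0 ≤ T e k :=
    fun e he k => DetEquivAux.fR_nonneg hM hD hS hρ he k
  have hTmono : ∀ e e' : Fin K → ℝ, (∀ j, 0 ≤ e j) → (∀ j, e j ≤ e' j) →
      ∀ k, T e k ≤ T e' k := fun e e' he h k => DetEquivAux.fR_mono hM hD hS hρ he h k
  -- the three iterate sequences
  set u : ℕ → Fin K → ℝ := fun t => T^[t] (fun _ => 0) with hu
  set v : ℕ → Fin K → ℝ := fun t => T^[t] (fun _ => b) with hv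
  have hu_succ : ∀ t, u (t + 1) = T (u t) := fun t => Function.iterate_succ_apply' T t _
  have hv_succ : ∀ t, v (t + 1) = T (v t) := fun t => Function.iterate_succ_apply' T t _
  -- nonnegativity
  have hu0 : ∀ t k, 0 ≤ u t k := by
    intro t
    induction t with
    | zero => intro k; simp [hu]
    | succ t ih => intro k; rw [hu_succ]; exact hT0 _ ih k
  have hv0 : ∀ t k, 0 ≤ v t k := by
    intro t
    induction t with
    | zero => intro k; simpa [hv] using hb0
    | succ t ih => intro k; rw [hv_succ]; exact hT0 _ ih k
  -- monotonicity in t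
  have humono : ∀ t k, u t k ≤ u (t + 1) k := by
    intro t
    induction t with
    | zero => intro k; rw [hu_succ]; simpa [hu] using hT0 _ (fun j => le_refl 0) k
    | succ t ih =>
        intro k
        rw [hu_succ (t + 1)]
        conv_lhs => rw [hu_succ t]
        exact hTmono _ _ (hu0 t) ih k
  have hvmono : ∀ t k, v (t + 1) k ≤ v t k := by
    intro t
    induction t with
    | zero =>
        intro k
        rw [hv_succ]
        simpa [hv] using hTb (fun _ => b) (fun _ => hb0) k
    | succ t ih =>
        intro k
        rw [hv_succ (t + 1)]
        conv_rhs => rw [hv_succ t]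
        exact hTmono _ _ (hv0 (t + 1)) ih k
  -- sandwich of the real iteration
  have hiter0 : ∀ t k, 0 ≤ DetEquivAux.iterR D S ρ t k :=
    DetEquivAux.iterR_nonneg hM hD hS hρ
  have hsand : ∀ t k, u t k ≤ DetEquivAux.iterR D S ρ t k ∧
      DetEquivAux.iterR D S ρ t k ≤ v t k := by
    intro t
    induction t with
    | zero =>
        intro k
        constructor
        · simp [hu, DetEquivAux.iterR]; positivity
        · simpa [hv, DetEquivAux.iterR] using hρinvb
    | succ t ih =>
        intro k
        constructor
        · rw [hu_succ]
          exact hTmono _ _ (hu0 t) (fun j => (ih j).1) k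
        · rw [hv_succ]
          exact hTmono _ _ (hiter0 t) (fun j => (ih j).2) k
  -- bounds
  have hub : ∀ t k, u t k ≤ b := by
    intro t k
    have hvb : ∀ t k, v t k ≤ b := by
      intro t
      induction t with
      | zero => intro k; simp [hv]
      | succ t ih => intro k; exact le_trans (hvmono t k) (ih k)
    exact le_trans (le_trans (hsand t k).1 (hsand t k).2) (hvb t k)
  -- limits
  have huconv : ∀ k, Tendsto (fun t => u t k) atTop (nhds (⨆ t, u t k)) := by
    intro k
    refine tendsto_atTop_ciSup (monotone_nat_of_le_succ fun t => humono t k) ?_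
    exact ⟨b, by rintro x ⟨t, rfl⟩; exact hub t k⟩
  have hvconv : ∀ k, Tendsto (fun t => v t k) atTop (nhds (⨅ t, v t k)) := by
    intro k
    refine tendsto_atTop_ciInf (antitone_nat_of_succ_le fun t => hvmono t k) ?_
    exact ⟨0, by rintro x ⟨t, rfl⟩; exact hv0 t k⟩
  set eu : Fin K → ℝ := fun k => ⨆ t, u t k with heu
  set ev : Fin K → ℝ := fun k => ⨅ t, v t k with hev
  have heu0 : ∀ k, 0 ≤ eu k := by
    intro k
    have : u 0 k ≤ eu k := le_ciSup ⟨b, by rintro x ⟨t, rfl⟩; exact hub t k⟩ 0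
    simpa [hu] using this
  have hev0 : ∀ k, 0 ≤ ev k := fun k =>
    le_ciInf fun t => hv0 t k
  have heuev : ∀ k, eu k ≤ ev k := fun k =>
    le_of_tendsto_of_tendsto' (huconv k) (hvconv k)
      (fun t => le_trans (hsand t k).1 (hsand t k).2)
  -- fixed-point property of the limits
  have hfixu : ∀ k, T eu k = eu k := by
    intro k
    have hpi : Tendsto u atTop (nhds eu) := tendsto_pi_nhds.mpr huconv
    have h1 : Tendsto (fun t => T (u t) k) atTop (nhds (T eu k)) :=
      ((DetEquivAux.fR_continuousAt hM hD hS hρ heu0 k).tendsto).comp hpi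
    have h2 : Tendsto (fun t => u (t + 1) k) atTop (nhds (eu k)) :=
      (huconv k).comp (tendsto_add_atTop_nat 1)
    have h3 : (fun t => T (u t) k) = fun t => u (t + 1) k := by
      funext t; rw [hu_succ]
    rw [h3] at h1
    exact tendsto_nhds_unique h1 h2
  have hfixv : ∀ k, T ev k = ev k := by
    intro k
    have hpi : Tendsto v atTop (nhds ev) := tendsto_pi_nhds.mpr hvconv
    have h1 : Tendsto (fun t => T (v t) k) atTop (nhds (T ev k)) :=
      ((DetEquivAux.fR_continuousAt hM hD hS hρ hev0 k).tendsto).comp hpi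
    have h2 : Tendsto (fun t => v (t + 1) k) atTop (nhds (ev k)) :=
      (hvconv k).comp (tendsto_add_atTop_nat 1)
    have h3 : (fun t => T (v t) k) = fun t => v (t + 1) k := by
      funext t; rw [hv_succ]
    rw [h3] at h1
    exact tendsto_nhds_unique h1 h2
  -- zero components
  have hzero : ∀ k, D k = 0 → eu k = 0 ∧ ev k = 0 := by
    intro k hk
    constructor
    · rw [← hfixu k, hT]; exact DetEquivAux.fR_zero_of_D_zero hM hD hS hρ k hk
    · rw [← hfixv k, hT]; exact DetEquivAux.fR_zero_of_D_zero hM hD hS hρ k hk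
  have heupos : ∀ k, D k ≠ 0 → 0 < eu k := by
    intro k hk
    rw [← hfixu k]
    exact DetEquivAux.fR_pos hM hD hS hρ heu0 k hk
  -- uniqueness : eu = ev
  have hueq : ∀ k, eu k = ev k := by
    by_contra hne
    push_neg at hne
    obtain ⟨k0, hk0⟩ := hne
    have hk0lt : eu k0 < ev k0 := lt_of_le_of_ne (heuev k0) hk0
    have hk0D : D k0 ≠ 0 := by
      intro h0
      obtain ⟨h1, h2⟩ := hzero k0 h0
      rw [h1, h2] at hk0lt
      exact lt_irrefl _ hk0lt
    set P : Finset (Fin K) := Finset.univ.filter (fun k => D k ≠ 0) with hP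
    have hk0P : k0 ∈ P := by simp [hP, hk0D]
    have hPne : P.Nonempty := ⟨k0, hk0P⟩
    set α : ℝ := (P.image fun k => ev k / eu k).max' (hPne.image _) with hα
    have hα1 : 1 < α := by
      have h1 : ev k0 / eu k0 ≤ α := by
        rw [hα]
        exact Finset.le_max' _ _ (Finset.mem_image_of_mem (fun k => ev k / eu k) hk0P)
      have h2 : 1 < ev k0 / eu k0 := (one_lt_div (heupos k0 hk0D)).mpr hk0lt
      linarith
    have hle : ∀ k, ev k ≤ α * eu k := by
      intro k
      by_cases hk : D k = 0
      · obtain ⟨h1, h2⟩ := hzero k hk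
        rw [h1, h2, mul_zero]
      · have h1 : ev k / eu k ≤ α := by
          rw [hα]
          exact Finset.le_max' _ _ (Finset.mem_image_of_mem (fun k => ev k / eu k)
            (Finset.mem_filter.mpr ⟨Finset.mem_univ k, hk⟩))
        exact (div_le_iff₀ (heupos k hk)).mp h1
    obtain ⟨k1, hk1P, hk1eq⟩ := Finset.mem_image.mp ((P.image fun k => ev k / eu k).max'_mem (hPne.image _))
    have hk1D : D k1 ≠ 0 := by simpa [hP] using hk1P
    have hk1 : ev k1 = α * eu k1 := by
      have hk1eq' : ev k1 / eu k1 = α := by rw [hα]; exact hk1eq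
      rw [← hk1eq', div_mul_cancel₀ _ (ne_of_gt (heupos k1 hk1D))]
    have hchain : ev k1 < ev k1 := by
      calc ev k1 = T ev k1 := (hfixv k1).symm
        _ ≤ T (fun j => α * eu j) k1 :=
            hTmono _ _ hev0 (fun j => hle j) k1
        _ < α * T eu k1 :=
            DetEquivAux.fR_scal hM hD hS hρ heu0 hα1 k1 hk1D
        _ = α * eu k1 := by rw [hfixu k1]
        _ = ev k1 := hk1.symm
    exact lt_irrefl _ hchain
  -- conclude
  refine ⟨eu, heu0, ?_, ?_⟩
  · intro k
    -- squeeze for the real iteration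
    have hgconv : Tendsto (fun t => DetEquivAux.iterR D S ρ t k) atTop (nhds (eu k)) := by
      have hvconv' : Tendsto (fun t => v t k) atTop (nhds (eu k)) := by
        have h0 := hvconv k
        have h1 : (⨅ t, v t k) = ev k := (congrFun hev k).symm
        rwa [h1, ← hueq k] at h0
      exact tendsto_of_tendsto_of_tendsto_of_le_of_le (huconv k) hvconv'
        (fun t => (hsand t k).1) (fun t => (hsand t k).2)
    have hcast : (fun t => detEquivIter M K D S ρ t k)
        = fun t => ((DetEquivAux.iterR D S ρ t k : ℝ) : ℂ) := by
      funext t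
      exact DetEquivAux.detEquivIter_eq hM hD hS hρ t k
    rw [hcast]
    exact (Complex.continuous_ofReal.tendsto _).comp hgconv
  · intro k
    have h1 : (M : ℂ)⁻¹ • ∑ j, ((1 : ℂ) + (eu j : ℂ))⁻¹ • D j + S + (ρ : ℂ) • 1
        = DetEquivAux.Amat D S ρ (DetEquivAux.coeff eu) := by
      rw [DetEquivAux.Amat]
      have hsum : ∑ j, ((1 : ℂ) + (eu j : ℂ))⁻¹ • D j
          = ∑ j, ((DetEquivAux.coeff eu j : ℝ) : ℂ) • D j := by
        refine Finset.sum_congr rfl fun j _ => ?_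
        congr 1
        rw [DetEquivAux.coeff]
        push_cast
        ring
      rw [hsum]
    rw [h1]
    show (eu k : ℂ) = DetEquivAux.fC D S ρ eu k
    rw [DetEquivAux.fC_eq_ofReal hM hD hS hρ heu0]
    rw [show DetEquivAux.fR D S ρ eu k = eu k from hfixu k]
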